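/- arXiv:1307.4795 — 2 statements merged into one kernel-verified Lean document; each statement's English description precedes it below -/
import Mathlib

section
/- Let k be a positive integer and let f ∈ L²(ℝ) be supported in [0,2] with vanishing moments ∫_ℝ x^j f(x) dx = 0 for j = 0, 1, …, k−1. Then for every ω ∈ ℝ, |F f(ω)| ≤ (2^k/(√π · k!)) |ω|^k ‖f‖_{L²(ℝ)}. -/
open MeasureTheory Set

/-- Taylor remainder of `exp (I t)`. -/
noncomputable def Etay (n : ℕ) (t : ℝ) : ℂ :=
  Complex.exp (Complex.I * t) -
    ∑ j ∈ Finset.range n, (Complex.I * t) ^ j / (Nat.factorial j : ℂ)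

lemma continuous_Etay (m : ℕ) : Continuous fun s : ℝ => Etay m s := by
  unfold Etay
  exact (Complex.continuous_exp.comp (continuous_const.mul Complex.continuous_ofReal)).sub
    (continuous_finset_sum _ fun j _ =>
      ((continuous_const.mul Complex.continuous_ofReal).pow j).div_const _)

lemma hasDerivAt_Etay (n : ℕ) (t : ℝ) :
    HasDerivAt (fun u : ℝ => Etay (n + 1) u) (Complex.I * Etay n t) t := by
  have hexp : HasDerivAt (fun u : ℝ => Complex.exp (Complex.I * u))
      (Complex.I * Complex.exp (Complex.I * t)) t := by
    have h1 : HasDerivAt (fun z : ℂ => Complex.exp (Complex.I * z))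
        (Complex.exp (Complex.I * t) * (Complex.I * 1)) (t : ℂ) :=
      (Complex.hasDerivAt_exp _).comp _ ((hasDerivAt_id _).const_mul Complex.I)
    have := h1.comp_ofReal
    convert this using 1
    ring
  have hsum : HasDerivAt (fun u : ℝ => ∑ j ∈ Finset.range (n + 1),
      (Complex.I * u) ^ j / (Nat.factorial j : ℂ))
      (Complex.I * ∑ j ∈ Finset.range n, (Complex.I * t) ^ j / (Nat.factorial j : ℂ)) t := by
    have heq : (fun u : ℝ => ∑ j ∈ Finset.range (n + 1),
        (Complex.I * u) ^ j / (Nat.factorial j : ℂ)) =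
        fun u : ℝ => (∑ j ∈ Finset.range n,
          (Complex.I * u) ^ (j + 1) / (Nat.factorial (j + 1) : ℂ)) + 1 := by
      funext u
      rw [Finset.sum_range_succ']
      simp
    rw [heq]
    have hterm : ∀ j : ℕ, HasDerivAt (fun u : ℝ =>
        (Complex.I * u) ^ (j + 1) / (Nat.factorial (j + 1) : ℂ))
        (Complex.I * ((Complex.I * t) ^ j / (Nat.factorial j : ℂ))) t := by
      intro j
      have h2 : HasDerivAt (fun z : ℂ => (Complex.I * z) ^ (j + 1) / (Nat.factorial (j + 1) : ℂ))
          (((j + 1 : ℕ) : ℂ) * (Complex.I * t) ^ (j + 1 - 1) * (Complex.I * 1) /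
            (Nat.factorial (j + 1) : ℂ)) (t : ℂ) :=
        (((hasDerivAt_id (t : ℂ)).const_mul Complex.I).pow (j + 1)).div_const _
      have := h2.comp_ofReal
      convert this using 1
      have hfac : ((Nat.factorial (j + 1) : ℂ)) = ((j + 1 : ℕ) : ℂ) * (Nat.factorial j : ℂ) := by
        rw [Nat.factorial_succ]; push_cast; ring
      have h0 : ((j + 1 : ℕ) : ℂ) ≠ 0 := Nat.cast_ne_zero.2 (Nat.succ_ne_zero j)
      have h0' : ((Nat.factorial j : ℂ)) ≠ 0 := Nat.cast_ne_zero.2 (Nat.factorial_ne_zero j)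
      rw [Nat.add_sub_cancel, hfac, ← mul_div_assoc,
        div_eq_div_iff h0' (mul_ne_zero h0 h0')]
      ring
    have := (HasDerivAt.fun_sum (fun j (_ : j ∈ Finset.range n) => hterm j)).add_const 1
    exact this.congr_deriv (by rw [Finset.mul_sum])
  have := hexp.sub hsum
  exact this.congr_deriv (by unfold Etay; ring)

lemma Etay_norm_le (n : ℕ) : ∀ t : ℝ, 0 ≤ t →
    ‖Etay n t‖ ≤ t ^ n / (Nat.factorial n : ℝ) := by
  induction n with
  | zero =>
    intro t _
    simp only [Etay, Finset.range_zero, Finset.sum_empty, sub_zero, pow_zero,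
      Nat.factorial_zero, Nat.cast_one, div_one]
    rw [mul_comm, Complex.norm_exp_ofReal_mul_I]
  | succ n ih =>
    intro t ht
    have h0 : Etay (n + 1) 0 = 0 := by
      unfold Etay
      rw [Finset.sum_range_succ']
      simp
    have hint : IntervalIntegrable (fun s => Complex.I * Etay n s) volume 0 t :=
      (continuous_const.mul (continuous_Etay n)).intervalIntegrable _ _
    have key : Etay (n + 1) t = ∫ s in (0:ℝ)..t, Complex.I * Etay n s := by
      rw [intervalIntegral.integral_eq_sub_of_hasDerivAt
        (fun s _ => hasDerivAt_Etay n s) hint, h0, sub_zero]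
    calc ‖Etay (n + 1) t‖ = ‖∫ s in (0:ℝ)..t, Complex.I * Etay n s‖ := by rw [key]
      _ ≤ ∫ s in (0:ℝ)..t, ‖Complex.I * Etay n s‖ :=
          intervalIntegral.norm_integral_le_integral_norm ht
      _ ≤ ∫ s in (0:ℝ)..t, s ^ n / (Nat.factorial n : ℝ) := by
          apply intervalIntegral.integral_mono_on ht
          · exact (continuous_const.mul (continuous_Etay n)).norm.intervalIntegrable _ _
          · exact ((continuous_pow n).div_const _).intervalIntegrable _ _
          · intro s hs
            rw [norm_mul, Complex.norm_I, one_mul]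
            exact ih s hs.1
      _ = t ^ (n + 1) / (Nat.factorial (n + 1) : ℝ) := by
          rw [intervalIntegral.integral_div, integral_pow]
          have h1 : ((n:ℝ) + 1) ≠ 0 := by positivity
          have h2 : ((Nat.factorial n : ℝ)) ≠ 0 := Nat.cast_ne_zero.2 (Nat.factorial_ne_zero n)
          rw [Nat.factorial_succ]
          push_cast
          field_simp
          simp

lemma Etay_norm_le' (n : ℕ) (t : ℝ) :
    ‖Etay n t‖ ≤ |t| ^ n / (Nat.factorial n : ℝ) := by
  rcases le_or_gt 0 t with h | h
  · rw [_root_.abs_of_nonneg h]; exact Etay_norm_le n t h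
  · have hconj : Etay n t = starRingEnd ℂ (Etay n (-t)) := by
      unfold Etay
      rw [map_sub, map_sum]
      congr 1
      · rw [← Complex.exp_conj]
        congr 1
        simp [Complex.conj_ofReal]
      · refine Finset.sum_congr rfl fun j _ => ?_
        rw [map_div₀, map_pow, map_mul, Complex.conj_I, Complex.conj_ofReal, map_natCast]
        push_cast
        ring_nf
    rw [hconj, RCLike.norm_conj, _root_.abs_of_neg h]
    exact Etay_norm_le n (-t) (by linarith)

/-- Fourier transform `F f(ω) = (2π)^{-1/2} ∫ e^{-iωx} f(x) dx`. -/
noncomputable def FT (f : ℝ → ℝ) (ω : ℝ) : ℂ :=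
  (((2 * Real.pi) ^ (-(1:ℝ)/2) : ℝ) : ℂ) *
    ∫ x : ℝ, Complex.exp (-(Complex.I * ω * x)) * f x

/-- Let `k ≥ 1` and let `f ∈ L²(ℝ)` be supported in `[0,2]` with vanishing
moments `∫ x^j f(x) dx = 0` for `j = 0, …, k-1`. Then for every `ω`,
`|F f(ω)| ≤ (2^k/(√π · k!)) |ω|^k ‖f‖_{L²(ℝ)}`. -/
theorem stmt6 (k : ℕ) (hk : 0 < k) (f : ℝ → ℝ)
    (hf : MemLp f 2 volume)
    (hsupp : Function.support f ⊆ Icc (0:ℝ) 2)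
    (hmom : ∀ j < k, ∫ x : ℝ, x ^ j * f x = 0) :
    ∀ ω : ℝ, ‖FT f ω‖ ≤
      2 ^ k / (Real.sqrt Real.pi * (Nat.factorial k : ℝ)) * |ω| ^ k *
        Real.sqrt (∫ x : ℝ, f x ^ 2) := by
  intro ω
  have hfm : AEStronglyMeasurable f volume := hf.aestronglyMeasurable
  have hzero : ∀ x, x ∉ Icc (0:ℝ) 2 → f x = 0 := fun x hx =>
    Function.notMem_support.1 fun hs => hx (hsupp hs)
  have hvol : volume (Icc (0:ℝ) 2) ≠ ⊤ := by
    rw [Real.volume_Icc]; exact ENNReal.ofReal_ne_top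
  have hfi : Integrable f := memLp_one_iff_integrable.1 <|
    hf.mono_exponent_of_measure_support_ne_top hzero hvol (by norm_num)
  have hsq : Integrable (fun x => f x ^ 2) := (memLp_two_iff_integrable_sq hfm).1 hf
  set S := ∫ x : ℝ, f x ^ 2 with hSdef
  have hS0 : 0 ≤ S := integral_nonneg fun x => sq_nonneg _
  have hfac : (0:ℝ) < (Nat.factorial k : ℝ) := by
    exact_mod_cast Nat.factorial_pos k
  -- Cauchy–Schwarz type bound: ∫ |f| ≤ √2 √S
  have hCS : ∫ x : ℝ, |f x| ≤ Real.sqrt 2 * Real.sqrt S := by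
    rcases eq_or_lt_of_le hS0 with hS | hS
    · -- S = 0 : f = 0 a.e.
      have h0 : (fun x => f x ^ 2) =ᵐ[volume] 0 :=
        (integral_eq_zero_iff_of_nonneg (fun x => sq_nonneg _) hsq).1 hS.symm
      have h1 : (fun x => |f x|) =ᵐ[volume] 0 := by
        filter_upwards [h0] with x hx
        have : f x = 0 := by
          have := hx
          simpa [pow_eq_zero_iff] using hx
        simp [this]
      rw [integral_congr_ae h1]
      simp only [Pi.zero_apply, integral_zero]
      positivity
    · have hsS : 0 < Real.sqrt S := Real.sqrt_pos.2 hS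
      have hs2 : (0:ℝ) < Real.sqrt 2 := by positivity
      set c : ℝ := Real.sqrt S / Real.sqrt 2 with hc
      have hc0 : 0 < c := by positivity
      have hgint : Integrable (fun x =>
          (Icc (0:ℝ) 2).indicator (fun _ => c / 2) x + f x ^ 2 / (2 * c)) := by
        refine Integrable.add ?_ (hsq.div_const _)
        rw [integrable_indicator_iff measurableSet_Icc]
        exact integrableOn_const hvol
      have hptw : ∀ x : ℝ, |f x| ≤
          (Icc (0:ℝ) 2).indicator (fun _ => c / 2) x + f x ^ 2 / (2 * c) := by
        intro x
        by_cases hx : x ∈ Icc (0:ℝ) 2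
        · rw [indicator_of_mem hx]
          rw [div_add_div _ _ (by norm_num) (by positivity), le_div_iff₀ (by positivity)]
          nlinarith [sq_nonneg (c - |f x|), _root_.sq_abs (f x)]
        · rw [indicator_of_notMem hx, hzero x hx]
          simp
      calc ∫ x : ℝ, |f x|
          ≤ ∫ x : ℝ, ((Icc (0:ℝ) 2).indicator (fun _ => c / 2) x + f x ^ 2 / (2 * c)) :=
            integral_mono hfi.abs hgint hptw
        _ = c + S / (2 * c) := by
            rw [integral_add ((integrable_indicator_iff measurableSet_Icc).2
                  (integrableOn_const hvol))
                (hsq.div_const _), integral_indicator_const _ measurableSet_Icc,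
                integral_div]
            rw [Real.volume_real_Icc]
            norm_num [ENNReal.toReal_ofReal]
            ring
        _ = Real.sqrt 2 * Real.sqrt S := by
            rw [hc]
            have h2 : Real.sqrt 2 ^ 2 = 2 := Real.sq_sqrt (by norm_num)
            have hSs : Real.sqrt S ^ 2 = S := Real.sq_sqrt hS0
            field_simp
            nlinarith [hsS, hs2]
  -- measurability of ℂ-valued f
  have hfmC : AEStronglyMeasurable (fun x : ℝ => (f x : ℂ)) volume :=
    Complex.continuous_ofReal.comp_aestronglyMeasurable hfm
  -- generic integrability of g * f for continuous g bounded on [0,2]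
  have hgen : ∀ (g : ℝ → ℂ) (C : ℝ), Continuous g → (∀ x ∈ Icc (0:ℝ) 2, ‖g x‖ ≤ C) →
      Integrable (fun x => g x * f x) := by
    intro g C hg hC
    refine Integrable.mono (hfi.abs.const_mul C)
      (hg.aestronglyMeasurable.mul hfmC) (ae_of_all _ fun x => ?_)
    by_cases hx : f x = 0
    · simp [hx]
    · have hxI : x ∈ Icc (0:ℝ) 2 := hsupp hx
      rw [norm_mul, Complex.norm_real]
      have hC0 : 0 ≤ C := le_trans (norm_nonneg _) (hC x hxI)
      calc ‖g x‖ * ‖f x‖ ≤ C * ‖f x‖ :=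
            mul_le_mul_of_nonneg_right (hC x hxI) (norm_nonneg _)
        _ ≤ ‖C * |f x|‖ := by
            rw [Real.norm_eq_abs]
            exact le_abs_self _
  have hintE : Integrable (fun x => Etay k (-(ω * x)) * f x) := by
    refine hgen _ ((2 * |ω|) ^ k / (Nat.factorial k : ℝ))
      ((continuous_Etay k).comp (continuous_const.mul continuous_id).neg) fun x hx => ?_
    refine le_trans (Etay_norm_le' k _) ?_
    gcongr
    rw [abs_neg, abs_mul]
    have : |x| ≤ 2 := by
      rw [_root_.abs_of_nonneg hx.1]; exact hx.2
    calc |ω| * |x| ≤ |ω| * 2 := by gcongr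
      _ = 2 * |ω| := by ring
  have hintP : ∀ j : ℕ, Integrable (fun x =>
      (Complex.I * ((-(ω * x) : ℝ) : ℂ)) ^ j / (Nat.factorial j : ℂ) * f x) := by
    intro j
    refine hgen _ ((2 * |ω|) ^ j / (Nat.factorial j : ℝ))
      ((((continuous_const.mul (Complex.continuous_ofReal.comp
        (continuous_const.mul continuous_id).neg)).pow j)).div_const _) fun x hx => ?_
    rw [norm_div, norm_pow, norm_mul, Complex.norm_I, one_mul, Complex.norm_real]
    have hj : (0:ℝ) < (Nat.factorial j : ℝ) := by exact_mod_cast Nat.factorial_pos j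
    rw [Complex.norm_natCast]
    gcongr
    rw [Real.norm_eq_abs, abs_neg, abs_mul]
    have : |x| ≤ 2 := by
      rw [_root_.abs_of_nonneg hx.1]; exact hx.2
    calc |ω| * |x| ≤ |ω| * 2 := by gcongr
      _ = 2 * |ω| := by ring
  -- the polynomial part integrates to zero
  have hPj : ∀ j < k, (∫ x : ℝ,
      (Complex.I * ((-(ω * x) : ℝ) : ℂ)) ^ j / (Nat.factorial j : ℂ) * f x) = 0 := by
    intro j hj
    have h1 : (fun x : ℝ =>
        (Complex.I * ((-(ω * x) : ℝ) : ℂ)) ^ j / (Nat.factorial j : ℂ) * f x) =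
        fun x : ℝ => ((-(Complex.I * ω)) ^ j / (Nat.factorial j : ℂ)) *
          ((x ^ j * f x : ℝ) : ℂ) := by
      funext x
      push_cast
      ring
    have h2 : (∫ a : ℝ, ((a ^ j * f a : ℝ) : ℂ)) = ((∫ a : ℝ, a ^ j * f a : ℝ) : ℂ) :=
      integral_ofReal
    rw [h1, MeasureTheory.integral_const_mul, h2, hmom j hj]
    simp
  -- split the Fourier integral
  have hsplit : (∫ x : ℝ, Complex.exp (-(Complex.I * ω * x)) * f x)
      = ∫ x : ℝ, Etay k (-(ω * x)) * f x := by
    have hker : (fun x : ℝ => Complex.exp (-(Complex.I * ω * x)) * f x)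
        = fun x => Etay k (-(ω * x)) * f x + ∑ j ∈ Finset.range k,
            (Complex.I * ((-(ω * x) : ℝ) : ℂ)) ^ j / (Nat.factorial j : ℂ) * f x := by
      funext x
      have harg : -(Complex.I * ω * x) = Complex.I * ((-(ω * x) : ℝ) : ℂ) := by
        push_cast; ring
      rw [harg]
      unfold Etay
      rw [← Finset.sum_mul]
      ring
    rw [hker, integral_add hintE (integrable_finset_sum _ fun j _ => hintP j),
      integral_finset_sum _ fun j _ => hintP j,
      Finset.sum_eq_zero fun j hj => hPj j (Finset.mem_range.1 hj), add_zero]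
  -- norm bound on the remainder integral
  have hbound : ‖∫ x : ℝ, Etay k (-(ω * x)) * f x‖ ≤
      (2 * |ω|) ^ k / (Nat.factorial k : ℝ) * ∫ x : ℝ, |f x| := by
    have hptw : ∀ x : ℝ, ‖Etay k (-(ω * x)) * f x‖ ≤
        (2 * |ω|) ^ k / (Nat.factorial k : ℝ) * |f x| := by
      intro x
      by_cases hx : f x = 0
      · simp [hx]
      · have hxI : x ∈ Icc (0:ℝ) 2 := hsupp hx
        rw [norm_mul, Complex.norm_real]
        refine mul_le_mul_of_nonneg_right ?_ (abs_nonneg _)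
        refine le_trans (Etay_norm_le' k _) ?_
        gcongr
        rw [abs_neg, abs_mul]
        have : |x| ≤ 2 := by
          rw [_root_.abs_of_nonneg hxI.1]; exact hxI.2
        calc |ω| * |x| ≤ |ω| * 2 := by gcongr
          _ = 2 * |ω| := by ring
    calc ‖∫ x : ℝ, Etay k (-(ω * x)) * f x‖
        ≤ ∫ x : ℝ, (2 * |ω|) ^ k / (Nat.factorial k : ℝ) * |f x| :=
          norm_integral_le_of_norm_le (hfi.abs.const_mul _) (ae_of_all _ hptw)
      _ = (2 * |ω|) ^ k / (Nat.factorial k : ℝ) * ∫ x : ℝ, |f x| := by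
          rw [MeasureTheory.integral_const_mul]
  -- coefficient computation
  have hcoef : (2 * Real.pi) ^ (-(1:ℝ)/2) = 1 / (Real.sqrt 2 * Real.sqrt Real.pi) := by
    rw [show (-(1:ℝ)/2) = -(1/2 : ℝ) by ring,
      Real.rpow_neg (by positivity), ← Real.sqrt_eq_rpow,
      Real.sqrt_mul (by norm_num), one_div]
  have hpi : (0:ℝ) < Real.sqrt Real.pi := Real.sqrt_pos.2 Real.pi_pos
  have hs2 : (0:ℝ) < Real.sqrt 2 := by positivity
  have hnorm : ‖FT f ω‖ = (2 * Real.pi) ^ (-(1:ℝ)/2) *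
      ‖∫ x : ℝ, Complex.exp (-(Complex.I * ω * x)) * f x‖ := by
    rw [FT, norm_mul, Complex.norm_real, Real.norm_eq_abs, _root_.abs_of_nonneg]
    positivity
  rw [hnorm, hsplit, hcoef]
  calc 1 / (Real.sqrt 2 * Real.sqrt Real.pi) * ‖∫ x : ℝ, Etay k (-(ω * x)) * f x‖
      ≤ 1 / (Real.sqrt 2 * Real.sqrt Real.pi) *
        ((2 * |ω|) ^ k / (Nat.factorial k : ℝ) * (Real.sqrt 2 * Real.sqrt S)) := by
        refine mul_le_mul_of_nonneg_left ?_ (by positivity)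
        refine le_trans hbound ?_
        exact mul_le_mul_of_nonneg_left hCS (by positivity)
    _ = 2 ^ k / (Real.sqrt Real.pi * (Nat.factorial k : ℝ)) * |ω| ^ k * Real.sqrt S := by
        rw [mul_pow]
        field_simp
end

section
/- Let α ∈ (1,2) and f ∈ L²(0,1), and define u(x) = −(I₀^α f)(x) + (I₀^α f)(1) · x^{α−1} for x ∈ (0,1]. Then u extends continuously to [0,1] with u(0) = u(1) = 0, the function I₀^{2−α} u is twice differentiable almost everywhere on (0,1), and −(d²/dx²)(I₀^{2−α} u)(x) = f(x) for almost every x ∈ (0,1); that is, u is a strong solution of the Riemann–Liouville boundary value problem −(d²/dx²)(I₀^{2−α} u) = f with zero Dirichlet boundary conditions. -/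
open MeasureTheory Set Filter Topology intervalIntegral

set_option maxHeartbeats 1000000

/-- Left Riemann–Liouville fractional integral of order `γ` on `(0,1)`. -/
noncomputable def I0 (γ : ℝ) (f : ℝ → ℝ) (x : ℝ) : ℝ :=
  (1 / Real.Gamma γ) * ∫ t in Ioo (0:ℝ) x, (x - t) ^ (γ - 1) * f t

lemma betaReal {p q y : ℝ} (hp : 0 < p) (hq : 0 < q) (hy : 0 < y) :
    ∫ s in (0:ℝ)..y, s ^ (p-1) * (y - s) ^ (q-1) =
      Real.Gamma p * Real.Gamma q / Real.Gamma (p+q) * y ^ (p+q-1) := by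
  have h1 := Complex.betaIntegral_scaled (p:ℂ) (q:ℂ) hy
  have h2 : ∫ x in (0:ℝ)..y, ((x:ℂ) ^ ((p:ℂ)-1) * ((y:ℂ) - (x:ℂ)) ^ ((q:ℂ)-1))
      = ((∫ s in (0:ℝ)..y, s ^ (p-1) * (y - s) ^ (q-1) : ℝ) : ℂ) := by
    rw [← intervalIntegral.integral_ofReal]
    refine intervalIntegral.integral_congr fun s hs => ?_
    rw [uIcc_of_le hy.le] at hs
    push_cast
    rw [Complex.ofReal_cpow hs.1, Complex.ofReal_cpow (by linarith [hs.2] : (0:ℝ) ≤ y - s)]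
    push_cast
    ring
  have hGpq : ((Real.Gamma (p+q) : ℝ) : ℂ) ≠ 0 := by
    exact_mod_cast (Real.Gamma_pos_of_pos (by linarith : (0:ℝ) < p + q)).ne'
  have hβ : Complex.betaIntegral (p:ℂ) (q:ℂ)
      = ((Real.Gamma p * Real.Gamma q / Real.Gamma (p+q) : ℝ) : ℂ) := by
    have h3 := Complex.Gamma_mul_Gamma_eq_betaIntegral
      (s := (p:ℂ)) (t := (q:ℂ)) (by simpa using hp) (by simpa using hq)
    rw [← Complex.ofReal_add, Complex.Gamma_ofReal, Complex.Gamma_ofReal,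
      Complex.Gamma_ofReal] at h3
    rw [Complex.ofReal_div, eq_div_iff hGpq, Complex.ofReal_mul, h3, mul_comm]
  have h5 : ((y:ℂ)) ^ ((p:ℂ) + (q:ℂ) - 1) = ((y ^ (p+q-1) : ℝ) : ℂ) := by
    rw [Complex.ofReal_cpow hy.le]; push_cast; ring_nf
  rw [h2, hβ, h5] at h1
  rw [mul_comm]
  exact_mod_cast h1

lemma ae_ftc {g : ℝ → ℝ} (hg : Integrable g (volume : Measure ℝ)) :
    ∀ᵐ x ∂(volume : Measure ℝ), HasDerivAt (fun y => ∫ t in (0:ℝ)..y, g t) (g x) x := by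
  have hv := (IsUnifLocDoublingMeasure.vitaliFamily (volume : Measure ℝ) 1).ae_tendsto_average
    hg.locallyIntegrable
  filter_upwards [hv] with x hx
  rw [hasDerivAt_iff_tendsto_slope]
  rw [← nhdsLT_sup_nhdsGT x, tendsto_sup]
  have hFsub : ∀ y : ℝ, (∫ t in (0:ℝ)..y, g t) - ∫ t in (0:ℝ)..x, g t = ∫ t in x..y, g t :=
    fun y => intervalIntegral.integral_interval_sub_left
      (hg.intervalIntegrable) (hg.intervalIntegrable)
  constructor
  · -- left: y < x
    have hR := hx.comp (Real.tendsto_Icc_vitaliFamily_left x)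
    refine hR.congr' ?_
    filter_upwards [self_mem_nhdsWithin] with y (hy : y < x)
    show ⨍ t in Icc y x, g t = slope (fun y => ∫ t in (0:ℝ)..y, g t) x y
    rw [setAverage_eq, slope_def_field, div_eq_inv_mul, hFsub y]
    rw [intervalIntegral.integral_symm, intervalIntegral.integral_of_le hy.le,
      Real.volume_real_Icc_of_le (by linarith), integral_Icc_eq_integral_Ioc]
    simp only [smul_eq_mul]
    rw [show (y - x) = -(x - y) by ring, inv_neg]
    ring
  · have hR := hx.comp (Real.tendsto_Icc_vitaliFamily_right x)
    refine hR.congr' ?_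
    filter_upwards [self_mem_nhdsWithin] with y (hy : x < y)
    show ⨍ t in Icc x y, g t = slope (fun y => ∫ t in (0:ℝ)..y, g t) x y
    rw [setAverage_eq, slope_def_field, div_eq_inv_mul, hFsub y,
      intervalIntegral.integral_of_le hy.le, Real.volume_real_Icc_of_le (by linarith),
      integral_Icc_eq_integral_Ioc]
    simp [smul_eq_mul]


lemma rpow_cont {e : ℝ} (he : 0 < e) : Continuous fun y : ℝ => y ^ e :=
  continuous_iff_continuousAt.2 fun y => Real.continuousAt_rpow_const y e (Or.inr he.le)

lemma contJ {e : ℝ} (he : 0 < e) {g : ℝ → ℝ} (hg : Integrable g (volume.restrict (Ioo (0:ℝ) 1))) :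
    ContinuousOn (fun x => ∫ t in Ioo (0:ℝ) 1, max (x - t) 0 ^ e * g t) (Icc 0 1) := by
  intro x hx
  have key : Tendsto (fun x' => ∫ t in Ioo (0:ℝ) 1, max (x' - t) 0 ^ e * g t)
      (𝓝[Icc (0:ℝ) 1] x) (𝓝 (∫ t in Ioo (0:ℝ) 1, max (x - t) 0 ^ e * g t)) := by
    apply MeasureTheory.tendsto_integral_filter_of_dominated_convergence
      (bound := fun t => |g t|)
    · refine Eventually.of_forall fun x' => ?_
      exact (((rpow_cont he).comp ((continuous_const.sub continuous_id).max
        continuous_const)).aestronglyMeasurable).mul hg.1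
    · filter_upwards [self_mem_nhdsWithin] with x' hx'
      filter_upwards [ae_restrict_mem measurableSet_Ioo] with t ht
      have h1 : max (x' - t) 0 ≤ 1 := by
        rcases hx' with ⟨h0, h1'⟩
        exact max_le (by linarith [ht.1]) zero_le_one
      have h2 : (0:ℝ) ≤ max (x' - t) 0 := le_max_right _ _
      have h3 : max (x' - t) 0 ^ e ≤ 1 := by
        calc max (x' - t) 0 ^ e ≤ 1 ^ e := Real.rpow_le_rpow h2 h1 he.le
        _ = 1 := Real.one_rpow e
      rw [norm_mul, Real.norm_eq_abs, Real.norm_eq_abs, abs_of_nonneg (Real.rpow_nonneg h2 e)]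
      nlinarith [abs_nonneg (g t)]
    · exact hg.abs
    · refine Eventually.of_forall fun t => ?_
      have : Continuous fun x' : ℝ => max (x' - t) 0 ^ e * g t :=
        (((rpow_cont he).comp ((continuous_id.sub continuous_const).max
          continuous_const))).mul continuous_const
      exact (this.tendsto x).mono_left nhdsWithin_le_nhds
  exact key

lemma maxform {e : ℝ} (he : 0 < e) (g : ℝ → ℝ) {x c : ℝ} (hx : x ≤ c) :
    ∫ t in Ioo (0:ℝ) c, max (x - t) 0 ^ e * g t = ∫ t in Ioo (0:ℝ) x, (x - t) ^ e * g t := by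
  have h1 : ∀ t ∈ Ioo (0:ℝ) c, max (x - t) 0 ^ e * g t
      = (Ioo (0:ℝ) x).indicator (fun t => (x - t) ^ e * g t) t := by
    intro t ht
    by_cases h : t < x
    · rw [indicator_of_mem (show t ∈ Ioo (0:ℝ) x from ⟨ht.1, h⟩), max_eq_left (by linarith)]
    · rw [indicator_of_notMem (fun hc => h hc.2), max_eq_right (by linarith),
        Real.zero_rpow he.ne', zero_mul]
  rw [setIntegral_congr_fun measurableSet_Ioo h1,
    setIntegral_indicator measurableSet_Ioo]
  congr 1
  rw [Ioo_inter_Ioo]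
  simp [hx]

lemma measurable_rpow_const (c : ℝ) : Measurable fun y : ℝ => y ^ c := by measurability


lemma betaCore {α : ℝ} (hα1 : 1 < α) (hα2 : α < 2) {y : ℝ} (hy : 0 < y) :
    ∫ s in (0:ℝ)..y, (y - s) ^ (1-α) * s ^ (α-1) = Real.Gamma α * Real.Gamma (2-α) * y := by
  have h := betaReal (p := α) (q := 2-α) (by linarith) (by linarith) hy
  have e1 : α + (2 - α) = 2 := by ring
  have e2 : (2:ℝ) - α - 1 = 1 - α := by ring
  rw [e1, e2, Real.Gamma_two, div_one] at h
  have e3 : (2:ℝ) - 1 = 1 := by norm_num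
  rw [e3, Real.rpow_one] at h
  rw [← h]
  exact intervalIntegral.integral_congr fun s _ => mul_comm _ _


lemma kernelInt {α x : ℝ} (hα2 : α < 2) (hx0 : 0 < x) :
    IntegrableOn (fun s : ℝ => (x - s) ^ (1-α)) (Ioo 0 x) volume := by
  have h1 : IntervalIntegrable (fun s : ℝ => s ^ (1-α)) volume 0 x :=
    intervalIntegrable_rpow' (by linarith)
  have h2 := h1.comp_sub_left x
  rw [sub_zero, sub_self] at h2
  rw [← intervalIntegrable_iff_integrableOn_Ioo_of_le hx0.le]
  exact h2.symm


lemma maxform2 {α : ℝ} (ha : (0:ℝ) < α - 1) {g : ℝ → ℝ}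
    (hg0 : ∀ t, t ∉ Ioo (0:ℝ) 1 → g t = 0) (s : ℝ) :
    ∫ t in Ioo (0:ℝ) s, (s - t) ^ (α-1) * g t = ∫ t, max (s - t) 0 ^ (α-1) * g t := by
  rw [← MeasureTheory.integral_indicator measurableSet_Ioo]
  congr 1
  funext t
  rw [Set.indicator_apply]
  by_cases h : t ∈ Ioo (0:ℝ) s
  · rw [if_pos h, max_eq_left (by linarith [(mem_Ioo.1 h).2])]
  · rw [if_neg h]
    by_cases h2 : t < s
    · have ht0 : ¬ (0:ℝ) < t := fun hc => h ⟨hc, h2⟩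
      rw [hg0 t (fun hc => ht0 hc.1), mul_zero]
    · rw [max_eq_right (by linarith), Real.zero_rpow (ne_of_gt ha), zero_mul]


lemma fubiniB2 {g : ℝ → ℝ} (hg : Integrable g (volume : Measure ℝ)) {x : ℝ} (hx0 : 0 < x) :
    ∫ s in (0:ℝ)..x, (∫ t in (0:ℝ)..s, g t) = ∫ t in Ioo (0:ℝ) x, (x - t) * g t := by
  classical
  set S : Set (ℝ × ℝ) := {q : ℝ × ℝ | 0 < q.2 ∧ q.2 ≤ q.1} with hSdef
  have hmeasS : MeasurableSet S :=
    (measurableSet_lt measurable_const measurable_snd).inter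
      (measurableSet_le measurable_snd measurable_fst)
  set Hp : ℝ × ℝ → ℝ := S.indicator (fun q => g q.2) with hHp
  have hH : ∀ s t : ℝ, Hp (s, t) = if 0 < t ∧ t ≤ s then g t else 0 := by
    intro s t
    rw [hHp, Set.indicator_apply]
    rfl
  have hHm : AEStronglyMeasurable Hp ((volume.restrict (Ioo (0:ℝ) x)).prod volume) :=
    (hg.1.comp_snd).indicator hmeasS
  haveI : IsFiniteMeasure (volume.restrict (Ioo (0:ℝ) x)) :=
    ⟨by rw [Measure.restrict_apply_univ, Real.volume_Ioo]; exact ENNReal.ofReal_lt_top⟩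
  have hHint : Integrable Hp ((volume.restrict (Ioo (0:ℝ) x)).prod volume) := by
    have hg2 : Integrable (fun q : ℝ × ℝ => g q.2)
        ((volume.restrict (Ioo (0:ℝ) x)).prod volume) := by
      rw [integrable_prod_iff hg.1.comp_snd]
      refine ⟨Eventually.of_forall fun s => hg, ?_⟩
      simpa using integrable_const (μ := volume.restrict (Ioo (0:ℝ) x)) (∫ y, ‖g y‖)
    exact hg2.indicator hmeasS
  have lhs_eq : ∫ s in (0:ℝ)..x, (∫ t in (0:ℝ)..s, g t)
      = ∫ s in Ioo (0:ℝ) x, ∫ t, Hp (s, t) := by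
    rw [intervalIntegral.integral_of_le hx0.le, integral_Ioc_eq_integral_Ioo]
    refine setIntegral_congr_fun measurableSet_Ioo fun s _ => ?_
    rw [intervalIntegral.integral_of_le (by linarith [mem_Ioo.1 ‹s ∈ Ioo (0:ℝ) x›] : (0:ℝ) ≤ s),
      ← MeasureTheory.integral_indicator measurableSet_Ioc]
    congr 1
  rw [lhs_eq]
  have swap := MeasureTheory.integral_integral_swap (f := fun s t => Hp (s, t)) (by exact hHint)
  rw [swap]
  have inner_eq : ∀ t : ℝ, (∫ s in Ioo (0:ℝ) x, Hp (s, t))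
      = (Ioo (0:ℝ) x).indicator (fun t => (x - t) * g t) t := by
    intro t
    by_cases ht0 : 0 < t
    · have h1 : (fun s => Hp (s, t)) = fun s => (Ici t).indicator (fun _ => g t) s := by
        funext s
        rw [hH, Set.indicator_apply]
        simp [ht0, mem_Ici]
      rw [h1, setIntegral_indicator measurableSet_Ici, setIntegral_const]
      rcases lt_or_ge t x with h | h
      · have h2 : Ioo (0:ℝ) x ∩ Ici t = Ico t x := by
          ext s; simp only [mem_inter_iff, mem_Ioo, mem_Ici, mem_Ico]
          constructor
          · rintro ⟨⟨_, h2⟩, h3⟩; exact ⟨h3, h2⟩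
          · rintro ⟨h1', h2⟩; exact ⟨⟨lt_of_lt_of_le ht0 h1', h2⟩, h1'⟩
        rw [h2, Set.indicator_apply, if_pos (mem_Ioo.2 ⟨ht0, h⟩), Real.volume_real_Ico_of_le (by linarith)]
        simp [smul_eq_mul]
      · have h2 : Ioo (0:ℝ) x ∩ Ici t = ∅ := by
          ext s; simp only [mem_inter_iff, mem_Ioo, mem_Ici, mem_empty_iff_false, iff_false]
          rintro ⟨⟨_, h2⟩, h3⟩; linarith
        rw [h2, Set.indicator_apply, if_neg (by simp only [mem_Ioo]; intro hc; linarith [hc.2])]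
        simp
    · have h1 : (fun s => Hp (s, t)) = fun _ => (0:ℝ) := by
        funext s; rw [hH, if_neg (fun hc => ht0 hc.1)]
      rw [h1, Set.indicator_apply, if_neg (by simp only [mem_Ioo]; intro hc; exact ht0 hc.1)]
      simp
  rw [MeasureTheory.integral_congr_ae (Eventually.of_forall inner_eq),
    MeasureTheory.integral_indicator measurableSet_Ioo]

lemma fubiniB {α : ℝ} (hα1 : 1 < α) (hα2 : α < 2) {g : ℝ → ℝ}
    (hg : Integrable g (volume : Measure ℝ)) (hg0 : ∀ t, t ∉ Ioo (0:ℝ) 1 → g t = 0)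
    {x : ℝ} (hx0 : 0 < x) (hx1 : x ≤ 1) :
    ∫ s in Ioo (0:ℝ) x, (x - s) ^ (1 - α) * (∫ t in Ioo (0:ℝ) s, (s - t) ^ (α - 1) * g t)
      = Real.Gamma α * Real.Gamma (2-α) * ∫ t in Ioo (0:ℝ) x, (x - t) * g t := by
  classical
  have ha : (0:ℝ) < α - 1 := by linarith
  have hane : α - 1 ≠ 0 := ne_of_gt ha
  set K : ℝ × ℝ → ℝ := fun p => (x - p.1) ^ (1-α) * (max (p.1 - p.2) 0 ^ (α-1) * g p.2)
    with hKdef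
  have hKapp : ∀ s t : ℝ, K (s, t) = (x - s) ^ (1-α) * (max (s - t) 0 ^ (α-1) * g t) :=
    fun s t => rfl
  -- step: rewrite inner integral in max-form
  have hmax : ∀ s : ℝ, ∫ t in Ioo (0:ℝ) s, (s - t) ^ (α-1) * g t
      = ∫ t, max (s - t) 0 ^ (α-1) * g t := by
    intro s
    rw [← MeasureTheory.integral_indicator measurableSet_Ioo]
    congr 1
    funext t
    rw [Set.indicator_apply]
    by_cases h : t ∈ Ioo (0:ℝ) s
    · rw [if_pos h, max_eq_left (by linarith [(mem_Ioo.1 h).2])]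
    · rw [if_neg h]
      by_cases h2 : t < s
      · have ht0 : ¬ (0:ℝ) < t := fun hc => h ⟨hc, h2⟩
        rw [hg0 t (fun hc => ht0 hc.1), mul_zero]
      · rw [max_eq_right (by linarith), Real.zero_rpow hane, zero_mul]
  -- measurability
  have hKm : AEStronglyMeasurable K ((volume.restrict (Ioo (0:ℝ) x)).prod volume) := by
    have h1 : Measurable fun p : ℝ × ℝ => (x - p.1) ^ (1-α) :=
      (measurable_rpow_const (1-α)).comp (measurable_const.sub measurable_fst)
    have h2 : Measurable fun p : ℝ × ℝ => max (p.1 - p.2) 0 ^ (α-1) :=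
      (measurable_rpow_const (α-1)).comp ((measurable_fst.sub measurable_snd).max
        measurable_const)
    exact h1.aestronglyMeasurable.mul (h2.aestronglyMeasurable.mul hg.1.comp_snd)
  -- kernel integrability
  have hkint : IntegrableOn (fun s : ℝ => (x - s) ^ (1-α)) (Ioo 0 x) volume := by
    have h1 : IntervalIntegrable (fun s : ℝ => s ^ (1-α)) volume 0 x :=
      intervalIntegrable_rpow' (by linarith)
    have h2 := h1.comp_sub_left x
    rw [sub_zero, sub_self] at h2
    rw [← intervalIntegrable_iff_integrableOn_Ioo_of_le hx0.le]
    exact h2.symm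
  -- pointwise bound
  have hbnd : ∀ s ∈ Ioo (0:ℝ) x, ∀ t : ℝ, ‖K (s, t)‖ ≤ (x - s) ^ (1-α) * ‖g t‖ := by
    intro s hs t
    have hxs : (0:ℝ) ≤ (x - s) ^ (1-α) := Real.rpow_nonneg (by linarith [hs.2]) _
    by_cases hgt : g t = 0
    · simp [hKapp, hgt]
    · have ht1 : t ∈ Ioo (0:ℝ) 1 := by
        by_contra h; exact hgt (hg0 t h)
      have hk1 : max (s - t) 0 ^ (α-1) ≤ 1 := by
        calc max (s - t) 0 ^ (α-1) ≤ (1:ℝ) ^ (α-1) :=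
              Real.rpow_le_rpow (le_max_right _ _)
                (max_le (by linarith [hs.2, ht1.1]) zero_le_one) ha.le
          _ = 1 := Real.one_rpow _
      have hk0 : (0:ℝ) ≤ max (s - t) 0 ^ (α-1) := Real.rpow_nonneg (le_max_right _ _) _
      rw [hKapp, norm_mul, norm_mul, Real.norm_eq_abs ((x - s) ^ (1-α)),
        abs_of_nonneg hxs, Real.norm_eq_abs (max (s - t) 0 ^ (α-1)), abs_of_nonneg hk0]
      exact mul_le_mul_of_nonneg_left (mul_le_of_le_one_left (norm_nonneg (g t)) hk1) hxs
  -- integrability on the product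
  have hKint : Integrable K ((volume.restrict (Ioo (0:ℝ) x)).prod volume) := by
    rw [integrable_prod_iff hKm]
    constructor
    · filter_upwards [ae_restrict_mem measurableSet_Ioo] with s hs
      refine Integrable.mono' (hg.norm.const_mul ((x - s) ^ (1-α))) ?_
        (Eventually.of_forall fun t => hbnd s hs t)
      have h2 : Measurable fun t : ℝ => (x - s) ^ (1-α) * max (s - t) 0 ^ (α-1) :=
        measurable_const.mul ((measurable_rpow_const (α-1)).comp
          ((measurable_const.sub measurable_id).max measurable_const))
      have : AEStronglyMeasurable (fun t => ((x - s) ^ (1-α) * max (s - t) 0 ^ (α-1)) * g t)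
          volume := h2.aestronglyMeasurable.mul hg.1
      refine this.congr (Eventually.of_forall fun t => ?_)
      show (x - s) ^ (1-α) * max (s - t) 0 ^ (α-1) * g t = K (s, t)
      rw [hKapp]; ring
    · refine Integrable.mono' (hkint.mul_const (∫ t, ‖g t‖)) ?_ ?_
      · exact (hKm.norm).integral_prod_right'
      · filter_upwards [ae_restrict_mem measurableSet_Ioo] with s hs
        have h0 : (0:ℝ) ≤ ∫ t, ‖K (s, t)‖ := integral_nonneg fun t => norm_nonneg _
        rw [Real.norm_eq_abs, abs_of_nonneg h0]
        calc ∫ t, ‖K (s, t)‖ ≤ ∫ t, (x - s) ^ (1-α) * ‖g t‖ := by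
              refine integral_mono_of_nonneg (Eventually.of_forall fun t => norm_nonneg _)
                (hg.norm.const_mul _) (Eventually.of_forall fun t => hbnd s hs t)
          _ = (x - s) ^ (1-α) * ∫ t, ‖g t‖ := integral_const_mul _ _
  -- rewrite LHS as iterated integral and swap
  have lhs_eq : ∫ s in Ioo (0:ℝ) x, (x - s) ^ (1 - α) * (∫ t in Ioo (0:ℝ) s, (s - t) ^ (α - 1) * g t)
      = ∫ s in Ioo (0:ℝ) x, ∫ t, K (s, t) := by
    refine setIntegral_congr_fun measurableSet_Ioo fun s _ => ?_
    rw [hmax s, ← MeasureTheory.integral_const_mul]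
  rw [lhs_eq, MeasureTheory.integral_integral_swap (f := fun s t => K (s, t)) (by exact hKint)]
  -- compute inner integral
  have inner_eq : ∀ t : ℝ, (∫ s in Ioo (0:ℝ) x, K (s, t))
      = (Ioo (0:ℝ) x).indicator
          (fun t => Real.Gamma α * Real.Gamma (2-α) * ((x - t) * g t)) t := by
    intro t
    by_cases hgt : g t = 0
    · have h1 : ∀ s, K (s, t) = 0 := fun s => by rw [hKapp, hgt, mul_zero, mul_zero]
      simp only [h1, MeasureTheory.integral_zero, Set.indicator_apply, hgt, mul_zero]
      split <;> simp
    · have ht1 : t ∈ Ioo (0:ℝ) 1 := by by_contra h; exact hgt (hg0 t h)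
      rcases lt_or_ge t x with hlt | hge
      · have hstep1 : (fun s => K (s, t))
            = fun s => ((Ioi t).indicator (fun s => (x - s) ^ (1-α) * (s - t) ^ (α-1)) s) * g t := by
          funext s
          rw [Set.indicator_apply, hKapp]
          by_cases h : s ∈ Ioi t
          · rw [if_pos h, max_eq_left (by linarith [mem_Ioi.1 h])]; ring
          · rw [if_neg h, max_eq_right (by simp only [mem_Ioi, not_lt] at h; linarith),
              Real.zero_rpow hane, zero_mul, mul_zero]
        rw [hstep1, MeasureTheory.integral_mul_const, setIntegral_indicator measurableSet_Ioi]
        have hint : Ioo (0:ℝ) x ∩ Ioi t = Ioo t x := by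
          ext s
          simp only [mem_inter_iff, mem_Ioo, mem_Ioi]
          constructor
          · rintro ⟨⟨_, h2⟩, h3⟩; exact ⟨h3, h2⟩
          · rintro ⟨h1', h2⟩; exact ⟨⟨lt_trans ht1.1 h1', h2⟩, h1'⟩
        rw [hint]
        have htr := intervalIntegral.integral_comp_add_right (a := 0) (b := x - t)
          (fun s => (x - s) ^ (1-α) * (s - t) ^ (α-1)) t
        rw [zero_add, sub_add_cancel] at htr
        have hbc : ∫ σ in (0:ℝ)..(x - t), (x - (σ + t)) ^ (1-α) * (σ + t - t) ^ (α-1)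
            = Real.Gamma α * Real.Gamma (2-α) * (x - t) := by
          rw [← betaCore hα1 hα2 (show (0:ℝ) < x - t by linarith)]
          refine intervalIntegral.integral_congr fun σ _ => ?_
          have e1 : x - (σ + t) = (x - t) - σ := by ring
          have e2 : σ + t - t = σ := by ring
          rw [e1, e2]
        rw [← integral_Ioc_eq_integral_Ioo, ← intervalIntegral.integral_of_le hlt.le,
          ← htr, hbc, indicator_of_mem (mem_Ioo.2 ⟨ht1.1, hlt⟩)]
        ring
      · have h1 : ∀ s ∈ Ioo (0:ℝ) x, K (s, t) = 0 := by
          intro s hs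
          rw [hKapp, max_eq_right (by linarith [hs.2]), Real.zero_rpow hane,
            zero_mul, mul_zero]
        rw [setIntegral_congr_fun measurableSet_Ioo h1,
          indicator_of_notMem (fun hc => by linarith [(mem_Ioo.1 hc).2])]
        simp
  rw [MeasureTheory.integral_congr_ae (Eventually.of_forall inner_eq),
    MeasureTheory.integral_indicator measurableSet_Ioo, MeasureTheory.integral_const_mul]

lemma key {α : ℝ} (hα1 : 1 < α) (hα2 : α < 2) {f g u : ℝ → ℝ}
    (hf1 : AEStronglyMeasurable f (volume.restrict (Ioo (0:ℝ) 1)))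
    (hg : Integrable g (volume : Measure ℝ)) (hgdef : g = (Ioo (0:ℝ) 1).indicator f)
    (hu : ∀ x, u x = -(I0 α f x) + I0 α f 1 * x ^ (α - 1))
    {x : ℝ} (hx : x ∈ Ioo (0:ℝ) 1) :
    I0 (2-α) u x = -(∫ s in (0:ℝ)..x, (∫ t in (0:ℝ)..s, g t))
      + (I0 α f 1 * Real.Gamma α) * x := by
  obtain ⟨hx0, hx1⟩ := hx
  have ha : (0:ℝ) < α - 1 := by linarith
  have hΓα : (0:ℝ) < Real.Gamma α := Real.Gamma_pos_of_pos (by linarith)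
  have hΓβ : (0:ℝ) < Real.Gamma (2-α) := Real.Gamma_pos_of_pos (by linarith)
  have hg0 : ∀ t, t ∉ Ioo (0:ℝ) 1 → g t = 0 := by
    intro t ht; rw [hgdef, indicator_of_notMem ht]
  set C := I0 α f 1 with hC
  set W : ℝ → ℝ := fun s => ∫ t in Ioo (0:ℝ) s, (s - t) ^ (α-1) * g t with hW
  -- I0 α f s in terms of g
  have hVs : ∀ s ∈ Ioo (0:ℝ) x, I0 α f s = (1 / Real.Gamma α) * W s := by
    intro s hs
    rw [I0, hW]
    congr 1
    refine setIntegral_congr_fun measurableSet_Ioo fun t ht => ?_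
    rw [hgdef, indicator_of_mem (show t ∈ Ioo (0:ℝ) 1 from
      ⟨ht.1, by linarith [ht.2, hs.2]⟩)]
  -- integrand decomposition on Ioo 0 x
  have hdecomp : ∀ s ∈ Ioo (0:ℝ) x, (x - s) ^ ((2-α) - 1) * u s
      = (-(1 / Real.Gamma α)) * ((x - s) ^ (1-α) * W s)
        + C * ((x - s) ^ (1-α) * s ^ (α-1)) := by
    intro s hs
    have e : (2:ℝ) - α - 1 = 1 - α := by ring
    rw [e, hu s, hVs s hs]
    ring
  -- integrability of the two pieces
  have hMg : Integrable (fun t => ‖g t‖) (volume : Measure ℝ) := hg.norm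
  have hWbd : ∀ s ∈ Ioo (0:ℝ) x, |W s| ≤ ∫ t, ‖g t‖ := by
    intro s hs
    rw [hW]
    have h1 : ∀ t ∈ Ioo (0:ℝ) s, ‖(s - t) ^ (α-1) * g t‖ ≤ ‖g t‖ := by
      intro t ht
      have hk1 : (s - t) ^ (α-1) ≤ 1 := by
        calc (s - t) ^ (α-1) ≤ (1:ℝ) ^ (α-1) :=
              Real.rpow_le_rpow (by linarith [ht.2]) (by linarith [ht.1, hs.2]) ha.le
          _ = 1 := Real.one_rpow _
      have hk0 : (0:ℝ) ≤ (s - t) ^ (α-1) := Real.rpow_nonneg (by linarith [ht.2]) _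
      rw [norm_mul, Real.norm_eq_abs ((s - t) ^ (α-1)), abs_of_nonneg hk0]
      exact mul_le_of_le_one_left (norm_nonneg _) hk1
    calc |W s| = ‖∫ t in Ioo (0:ℝ) s, (s - t) ^ (α-1) * g t‖ := rfl
      _ ≤ ∫ t in Ioo (0:ℝ) s, ‖(s - t) ^ (α-1) * g t‖ := norm_integral_le_integral_norm _
      _ ≤ ∫ t in Ioo (0:ℝ) s, ‖g t‖ := by
          have hi : IntegrableOn (fun t => (s - t) ^ (α-1) * g t) (Ioo 0 s) volume := by
            refine Integrable.mono' (hMg.integrableOn) ?_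
              ((ae_restrict_mem measurableSet_Ioo).mono fun t ht => h1 t ht)
            exact (((measurable_rpow_const (α-1)).comp
              (measurable_const.sub measurable_id)).aestronglyMeasurable.mul hg.1).restrict
          exact setIntegral_mono_on hi.norm (hMg.integrableOn) measurableSet_Ioo
            (fun t ht => by simpa using h1 t ht)
      _ ≤ ∫ t, ‖g t‖ := setIntegral_le_integral hMg
          ((ae_of_all _) fun t => norm_nonneg _)
  have hWm : AEStronglyMeasurable W (volume.restrict (Ioo (0:ℝ) x)) := by
    have h2 : Measurable fun p : ℝ × ℝ => max (p.1 - p.2) 0 ^ (α-1) :=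
      (measurable_rpow_const (α-1)).comp ((measurable_fst.sub measurable_snd).max
        measurable_const)
    have h3 : AEStronglyMeasurable (fun p : ℝ × ℝ => max (p.1 - p.2) 0 ^ (α-1) * g p.2)
        ((volume.restrict (Ioo (0:ℝ) x)).prod volume) :=
      h2.aestronglyMeasurable.mul hg.1.comp_snd
    have h4 := h3.integral_prod_right'
    refine h4.congr (Eventually.of_forall fun s => ?_)
    exact (maxform2 ha hg0 s).symm
  have hint1 : IntegrableOn (fun s => (x - s) ^ (1-α) * W s) (Ioo 0 x) volume := by
    refine Integrable.mono' ((kernelInt hα2 hx0).mul_const (∫ t, ‖g t‖)) ?_ ?_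
    · exact (((measurable_rpow_const (1-α)).comp
        (measurable_const.sub measurable_id)).aestronglyMeasurable.restrict).mul hWm
    · filter_upwards [ae_restrict_mem measurableSet_Ioo] with s hs
      have hxs : (0:ℝ) ≤ (x - s) ^ (1-α) := Real.rpow_nonneg (by linarith [hs.2]) _
      rw [norm_mul, Real.norm_eq_abs ((x - s) ^ (1-α)), abs_of_nonneg hxs]
      exact mul_le_mul_of_nonneg_left (by simpa using hWbd s hs) hxs
  have hint2 : IntegrableOn (fun s => (x - s) ^ (1-α) * s ^ (α-1)) (Ioo 0 x) volume := by
    refine Integrable.mono' ((kernelInt hα2 hx0).mul_const 1) ?_ ?_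
    · exact ((((measurable_rpow_const (1-α)).comp
        (measurable_const.sub measurable_id)).mul
        (measurable_rpow_const (α-1))).aestronglyMeasurable).restrict
    · filter_upwards [ae_restrict_mem measurableSet_Ioo] with s hs
      have hxs : (0:ℝ) ≤ (x - s) ^ (1-α) := Real.rpow_nonneg (by linarith [hs.2]) _
      have hs1 : s ^ (α-1) ≤ 1 := by
        calc s ^ (α-1) ≤ (1:ℝ) ^ (α-1) :=
              Real.rpow_le_rpow (le_of_lt hs.1) (by linarith [hs.2]) ha.le
          _ = 1 := Real.one_rpow _
      have hs0 : (0:ℝ) ≤ s ^ (α-1) := Real.rpow_nonneg (le_of_lt hs.1) _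
      rw [norm_mul, Real.norm_eq_abs ((x - s) ^ (1-α)), abs_of_nonneg hxs,
        Real.norm_eq_abs (s ^ (α-1)), abs_of_nonneg hs0]
      exact mul_le_mul_of_nonneg_left hs1 hxs
  -- beta for the second piece
  have hbetaA : ∫ s in Ioo (0:ℝ) x, (x - s) ^ (1-α) * s ^ (α-1)
      = Real.Gamma α * Real.Gamma (2-α) * x := by
    rw [← integral_Ioc_eq_integral_Ioo, ← intervalIntegral.integral_of_le hx0.le]
    exact betaCore hα1 hα2 hx0
  -- put it together
  rw [I0, setIntegral_congr_fun measurableSet_Ioo hdecomp,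
    integral_add ((hint1.const_mul _)) ((hint2.const_mul _)),
    MeasureTheory.integral_const_mul, MeasureTheory.integral_const_mul,
    fubiniB hα1 hα2 hg hg0 hx0 hx1.le, hbetaA, fubiniB2 hg hx0]
  field_simp


/-- For `α ∈ (1,2)`, `f ∈ L²(0,1)` and
`u(x) = -(I₀^α f)(x) + (I₀^α f)(1)·x^{α-1}`: `u` is continuous on `[0,1]` with
`u(0) = u(1) = 0`, `I₀^{2-α} u` is twice differentiable a.e. on `(0,1)`, and
`-(d²/dx²)(I₀^{2-α} u) = f` a.e. on `(0,1)`. -/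
theorem stmt10 (α : ℝ) (hα : α ∈ Ioo (1:ℝ) 2) (f : ℝ → ℝ)
    (hf : MemLp f 2 (volume.restrict (Ioo (0:ℝ) 1)))
    (u : ℝ → ℝ)
    (hu : ∀ x, u x = -(I0 α f x) + I0 α f 1 * x ^ (α - 1)) :
    ContinuousOn u (Icc (0:ℝ) 1) ∧ u 0 = 0 ∧ u 1 = 0 ∧
    (∀ᵐ x ∂(volume.restrict (Ioo (0:ℝ) 1)),
      DifferentiableAt ℝ (I0 (2 - α) u) x ∧
      DifferentiableAt ℝ (deriv (I0 (2 - α) u)) x ∧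
      -(deriv (deriv (I0 (2 - α) u)) x) = f x) := by
  obtain ⟨hα1, hα2⟩ := hα
  have ha : (0:ℝ) < α - 1 := by linarith
  haveI : IsFiniteMeasure (volume.restrict (Ioo (0:ℝ) 1)) :=
    ⟨by rw [Measure.restrict_apply_univ, Real.volume_Ioo]; norm_num⟩
  have hfi : Integrable f (volume.restrict (Ioo (0:ℝ) 1)) := hf.integrable (by norm_num)
  have hrep : ∀ x ∈ Icc (0:ℝ) 1, I0 α f x
      = (1 / Real.Gamma α) * ∫ t in Ioo (0:ℝ) 1, max (x - t) 0 ^ (α-1) * f t := by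
    intro x hx; rw [I0, maxform ha f hx.2]
  have hI0c : ContinuousOn (I0 α f) (Icc 0 1) :=
    (continuousOn_const.mul (contJ ha hfi)).congr hrep
  have huc : ContinuousOn u (Icc 0 1) := by
    have h : ContinuousOn (fun x => -(I0 α f x) + I0 α f 1 * x ^ (α-1)) (Icc 0 1) :=
      (hI0c.neg).add (continuous_const.mul (rpow_cont ha)).continuousOn
    exact h.congr fun x _ => hu x
  have hu0 : u 0 = 0 := by
    rw [hu 0, Real.zero_rpow (by linarith : α - 1 ≠ 0)]
    simp [I0]
  have hu1 : u 1 = 0 := by rw [hu 1, Real.one_rpow]; ring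
  refine ⟨huc, hu0, hu1, ?_⟩
  set g : ℝ → ℝ := (Ioo (0:ℝ) 1).indicator f with hgdef
  have hgi : Integrable g volume := by
    rw [hgdef, integrable_indicator_iff measurableSet_Ioo]; exact hfi
  set F : ℝ → ℝ := fun y => ∫ t in (0:ℝ)..y, g t with hFdef
  have hFc : Continuous F := hgi.continuous_primitive 0
  set c : ℝ := I0 α f 1 * Real.Gamma α with hcdef
  set G : ℝ → ℝ := fun y => -(∫ s in (0:ℝ)..y, F s) + c * y with hGdef
  have hG' : ∀ y, HasDerivAt G (-(F y) + c) y := by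
    intro y
    have h1 : HasDerivAt (fun z => ∫ s in (0:ℝ)..z, F s) (F y) y :=
      (hFc.integral_hasStrictDerivAt 0 y).hasDerivAt
    have h2 : HasDerivAt (fun z : ℝ => c * z) c y := by
      simpa using (hasDerivAt_id y).const_mul c
    exact (h1.neg).add h2
  have hkey : ∀ x ∈ Ioo (0:ℝ) 1, I0 (2-α) u x = G x := by
    intro x hx
    rw [hGdef]
    exact key hα1 hα2 hf.1 hgi hgdef hu hx
  have hae1 : ∀ᵐ x ∂(volume.restrict (Ioo (0:ℝ) 1)), HasDerivAt F (g x) x :=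
    ae_restrict_of_ae (ae_ftc hgi)
  filter_upwards [hae1, ae_restrict_mem measurableSet_Ioo] with x hFx hx
  have hloc : I0 (2-α) u =ᶠ[𝓝 x] G := eventually_of_mem (isOpen_Ioo.mem_nhds hx) hkey
  have hd1 : DifferentiableAt ℝ (I0 (2-α) u) x :=
    (hloc.differentiableAt_iff).2 (hG' x).differentiableAt
  have hdeq : deriv (I0 (2-α) u) =ᶠ[𝓝 x] deriv G := hloc.deriv
  have hderivG : deriv G = fun y => -(F y) + c := funext fun y => (hG' y).deriv
  have hG2 : HasDerivAt (deriv G) (-(g x)) x := by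
    rw [hderivG]
    simpa using (hFx.neg).add_const c
  have hd2 : DifferentiableAt ℝ (deriv (I0 (2-α) u)) x :=
    hdeq.differentiableAt_iff.2 hG2.differentiableAt
  refine ⟨hd1, hd2, ?_⟩
  rw [hdeq.deriv_eq, hG2.deriv, neg_neg, hgdef, indicator_of_mem hx]
end
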